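/- The integrated-exponential family separates finite measures (Appendix Lemma 14): Let μ and ν be finite measures on ℝ such that for every y ∈ ℝ, ∫_ℝ (∫₀^y e^{i t x} dt) dμ(x) = ∫_ℝ (∫₀^y e^{i t x} dt) dν(x). Then μ = ν. Equivalently, the family of bounded continuous functions { x ↦ ∫₀^y e^{i t x} dt : y ∈ ℝ } is separating for finite measures on ℝ. -/

import Mathlib

open MeasureTheory Filter
open scoped Topology ENNReal

section Auxiliary

open Complex
open scoped Real

noncomputable section

/-- continuity of the kernel jointly -/
lemma cont_kernel : Continuous (Function.uncurry fun (x t : ℝ) => Complex.exp (Complex.I * t * x)) := by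
  apply Complex.continuous_exp.comp
  continuity

/-- x ↦ ∫ t in 0..y, e^{itx} is continuous -/
lemma cont_primitive (y : ℝ) :
    Continuous fun x : ℝ => ∫ t in (0:ℝ)..y, Complex.exp (Complex.I * t * x) := by
  have := intervalIntegral.continuous_parametric_primitive_of_continuous
    (μ := volume) (a₀ := (0:ℝ)) (f := fun (x t : ℝ) => Complex.exp (Complex.I * t * x)) cont_kernel
  exact (this.comp (continuous_id.prodMk continuous_const) :)

lemma norm_exp_I (t x : ℝ) : ‖Complex.exp (Complex.I * t * x)‖ = 1 := by
  rw [show Complex.I * (t:ℂ) * x = (t*x : ℝ) * Complex.I by push_cast; ring]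
  simp [Complex.norm_exp]

lemma norm_primitive_le (y x : ℝ) :
    ‖∫ t in (0:ℝ)..y, Complex.exp (Complex.I * t * x)‖ ≤ |y| := by
  have h := intervalIntegral.norm_integral_le_of_norm_le_const
    (C := 1) (f := fun t : ℝ => Complex.exp (Complex.I * t * x)) (a := 0) (b := y) ?_
  · simpa using h
  · intro t _
    exact le_of_eq (norm_exp_I t x)

/-- char functions agree -/
lemma auxCharEq (μ ν : Measure ℝ) [IsFiniteMeasure μ] [IsFiniteMeasure ν]
    (h : ∀ y : ℝ,
      ∫ x : ℝ, (∫ t in (0 : ℝ)..y, Complex.exp (Complex.I * (t : ℂ) * (x : ℂ))) ∂μ =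
      ∫ x : ℝ, (∫ t in (0 : ℝ)..y, Complex.exp (Complex.I * (t : ℂ) * (x : ℂ))) ∂ν)
    (y : ℝ) :
    ∫ x : ℝ, Complex.exp (Complex.I * y * x) ∂μ = ∫ x : ℝ, Complex.exp (Complex.I * y * x) ∂ν := by
  have key : ∀ (ρ : Measure ℝ) [IsFiniteMeasure ρ],
      HasDerivAt (fun u : ℝ => ∫ x : ℝ, (∫ t in (0 : ℝ)..u, Complex.exp (Complex.I * t * x)) ∂ρ)
        (∫ x : ℝ, Complex.exp (Complex.I * y * x) ∂ρ) y := by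
    intro ρ _
    have H := hasDerivAt_integral_of_dominated_loc_of_deriv_le (μ := ρ) (x₀ := y)
      (F := fun u x => ∫ t in (0:ℝ)..u, Complex.exp (Complex.I * t * x))
      (F' := fun u x => Complex.exp (Complex.I * u * x))
      (bound := fun _ => (1:ℝ)) (s := Metric.ball y 1) (Metric.ball_mem_nhds y one_pos)
      ?_ ?_ ?_ ?_ ?_ ?_
    · exact H.2
    · exact Eventually.of_forall fun u => ((cont_primitive u).aestronglyMeasurable)
    · apply Integrable.mono' (g := fun _ => |y|)
      · exact integrable_const _
      · exact (cont_primitive y).aestronglyMeasurable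
      · exact Eventually.of_forall fun x => norm_primitive_le y x
    · exact (Complex.continuous_exp.comp (by continuity)).aestronglyMeasurable
    · refine Eventually.of_forall fun x u _ => ?_
      exact le_of_eq (norm_exp_I u x)
    · exact integrable_const _
    · refine Eventually.of_forall fun x u _ => ?_
      have hc : Continuous fun t : ℝ => Complex.exp (Complex.I * t * x) := by
        apply Complex.continuous_exp.comp; continuity
      exact intervalIntegral.integral_hasDerivAt_right (hc.intervalIntegrable 0 u)
        ⟨Set.univ, Filter.univ_mem, hc.aestronglyMeasurable.restrict⟩ hc.continuousAt
  have h1 := key μ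
  have h2 := key ν
  rw [funext h] at h1
  exact h1.unique h2

end

noncomputable section

lemma normExpIAux (t x : ℝ) : ‖Complex.exp (Complex.I * t * x)‖ = 1 := by
  rw [show Complex.I * (t:ℂ) * x = (t*x : ℝ) * Complex.I by push_cast; ring]
  simp [Complex.norm_exp]

/-- single measure computation -/
lemma auxGaussMoment (ρ : Measure ℝ) [IsFiniteMeasure ρ] {b : ℝ} (hb : 0 < b) (a : ℝ) :
    ∫ t : ℝ, Complex.exp (-Complex.I * a * t) * Complex.exp (-(b:ℂ) * t ^ 2) *
        (∫ x : ℝ, Complex.exp (Complex.I * t * x) ∂ρ)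
      = ((π : ℂ) / b) ^ (1/2 : ℂ) * ∫ x : ℝ, Complex.exp (-((x:ℂ) - a) ^ 2 / (4 * b)) ∂ρ := by
  have hbre : (0:ℝ) < ((b:ℂ)).re := by simpa using hb
  -- move the constant inside the inner integral
  have step1 : ∀ t : ℝ,
      Complex.exp (-Complex.I * a * t) * Complex.exp (-(b:ℂ) * t ^ 2) *
        (∫ x : ℝ, Complex.exp (Complex.I * t * x) ∂ρ)
      = ∫ x : ℝ, Complex.exp (Complex.I * ((x:ℂ) - a) * t) * Complex.exp (-(b:ℂ) * t ^ 2) ∂ρ := by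
    intro t
    rw [← integral_const_mul]
    refine integral_congr_ae (Eventually.of_forall fun x => ?_)
    simp only [← Complex.exp_add]
    ring_nf
  simp_rw [step1]
  -- Fubini
  have hint : Integrable (Function.uncurry fun (t x : ℝ) =>
      Complex.exp (Complex.I * ((x:ℂ) - a) * t) * Complex.exp (-(b:ℂ) * t ^ 2))
      (volume.prod ρ) := by
    have hmeas : AEStronglyMeasurable (Function.uncurry fun (t x : ℝ) =>
        Complex.exp (Complex.I * ((x:ℂ) - a) * t) * Complex.exp (-(b:ℂ) * t ^ 2))
        (volume.prod ρ) := by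
      apply Continuous.aestronglyMeasurable
      apply Continuous.mul
      · apply Complex.continuous_exp.comp; continuity
      · apply Complex.continuous_exp.comp; continuity
    refine Integrable.mono' (g := fun p : ℝ × ℝ => Real.exp (-b * p.1 ^ 2)) ?_ hmeas ?_
    · have : Integrable (fun t : ℝ => Real.exp (-b * t ^ 2)) volume := integrable_exp_neg_mul_sq hb
      simpa using this.mul_prod (integrable_const (1:ℝ))
    · refine Eventually.of_forall fun p => ?_
      simp only [Function.uncurry]
      rw [norm_mul]
      have h1 : ‖Complex.exp (Complex.I * ((p.2:ℂ) - a) * p.1)‖ = 1 := by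
        rw [show Complex.I * ((p.2:ℂ) - a) * p.1 = Complex.I * ((p.2 - a : ℝ):ℂ) * (p.1:ℂ) by
          push_cast; ring]
        exact normExpIAux _ _
      have h2 : ‖Complex.exp (-(b:ℂ) * (p.1:ℂ) ^ 2)‖ = Real.exp (-b * p.1 ^ 2) := by
        rw [show -(b:ℂ) * (p.1:ℂ) ^ 2 = ((-b * p.1 ^ 2 : ℝ) : ℂ) by push_cast; ring]
        rw [Complex.norm_exp, Complex.ofReal_re]
      rw [h1, h2, one_mul]
  rw [integral_integral_swap hint]
  -- apply the Gaussian Fourier integral pointwise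
  have step2 : ∀ x : ℝ,
      (∫ t : ℝ, Complex.exp (Complex.I * ((x:ℂ) - a) * t) * Complex.exp (-(b:ℂ) * t ^ 2))
      = ((π : ℂ) / b) ^ (1/2 : ℂ) * Complex.exp (-((x:ℂ) - a) ^ 2 / (4 * b)) := by
    intro x
    exact fourierIntegral_gaussian hbre ((x:ℂ) - a)
  simp_rw [step2]
  rw [integral_const_mul]

lemma auxGaussEq (μ ν : Measure ℝ) [IsFiniteMeasure μ] [IsFiniteMeasure ν]
    (hchar : ∀ y : ℝ,
      ∫ x : ℝ, Complex.exp (Complex.I * y * x) ∂μ = ∫ x : ℝ, Complex.exp (Complex.I * y * x) ∂ν)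
    {b : ℝ} (hb : 0 < b) (a : ℝ) :
    ∫ x : ℝ, Real.exp (-(x - a) ^ 2 / (4 * b)) ∂μ
      = ∫ x : ℝ, Real.exp (-(x - a) ^ 2 / (4 * b)) ∂ν := by
  have h1 := auxGaussMoment μ hb a
  have h2 := auxGaussMoment ν hb a
  simp_rw [hchar] at h1
  rw [h1] at h2
  have hne : ((π : ℂ) / b) ^ (1/2 : ℂ) ≠ 0 := by
    rw [Ne, Complex.cpow_eq_zero_iff]
    rintro ⟨h0, -⟩
    rw [div_eq_zero_iff] at h0
    rcases h0 with h0 | h0 <;> rw [Complex.ofReal_eq_zero] at h0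
    · exact Real.pi_ne_zero h0
    · exact hb.ne' h0
  have h3 := mul_left_cancel₀ hne h2
  -- convert to real integrals
  have conv : ∀ (ρ : Measure ℝ),
      ∫ x : ℝ, Complex.exp (-((x:ℂ) - a) ^ 2 / (4 * b)) ∂ρ
        = ((∫ x : ℝ, Real.exp (-(x - a) ^ 2 / (4 * b)) ∂ρ : ℝ) : ℂ) := by
    intro ρ
    calc ∫ x : ℝ, Complex.exp (-((x:ℂ) - a) ^ 2 / (4 * b)) ∂ρ
        = ∫ x : ℝ, ((Real.exp (-(x - a) ^ 2 / (4 * b)) : ℝ) : ℂ) ∂ρ := by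
          refine integral_congr_ae (Eventually.of_forall fun x => ?_)
          show Complex.exp (-((x:ℂ) - a) ^ 2 / (4 * b)) = ((Real.exp (-(x - a) ^ 2 / (4 * b)) : ℝ) : ℂ)
          rw [Complex.ofReal_exp]
          congr 1
          push_cast
          ring
      _ = _ := integral_ofReal
  rw [conv μ, conv ν] at h3
  exact_mod_cast h3

end

noncomputable section

lemma integrable_of_bdd {ρ : Measure ℝ} [IsFiniteMeasure ρ] {g : ℝ → ℝ}
    (hc : Continuous g) {C : ℝ} (hC : ∀ x, |g x| ≤ C) : Integrable g ρ :=
  Integrable.mono' (integrable_const C) hc.aestronglyMeasurable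
    (Eventually.of_forall (by simpa [Real.norm_eq_abs] using hC))

variable {f : ℝ → ℝ} {C : ℝ}

/-- substitution identity -/
lemma subst_identity (hf : Continuous f) {b : ℝ} (hb : 0 < b) (x : ℝ) :
    ∫ a : ℝ, f a * Real.exp (-(x - a) ^ 2 / (4 * b))
      = (2 * Real.sqrt b) * ∫ u : ℝ, f (x + 2 * Real.sqrt b * u) * Real.exp (-u ^ 2) := by
  set c : ℝ := 2 * Real.sqrt b with hc
  have hcpos : 0 < c := by positivity
  have hcsq : c ^ 2 = 4 * b := by
    rw [hc, mul_pow, Real.sq_sqrt hb.le]; ring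
  have h1 : ∫ a : ℝ, f a * Real.exp (-(x - a) ^ 2 / (4 * b))
      = ∫ s : ℝ, f (s + x) * Real.exp (-s ^ 2 / (4 * b)) := by
    rw [← integral_add_right_eq_self (fun a : ℝ => f a * Real.exp (-(x - a) ^ 2 / (4 * b))) x]
    refine integral_congr_ae (Eventually.of_forall fun s => ?_)
    show f (s + x) * Real.exp (-(x - (s + x)) ^ 2 / (4 * b)) = f (s + x) * Real.exp (-s ^ 2 / (4 * b))
    have : (x - (s + x)) ^ 2 = s ^ 2 := by ring
    rw [this]
  set G : ℝ → ℝ := fun s => f (s + x) * Real.exp (-s ^ 2 / (4 * b)) with hG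
  have h2 : ∫ u : ℝ, G (c * u) = |c⁻¹| • ∫ s : ℝ, G s :=
    MeasureTheory.Measure.integral_comp_mul_left G c
  rw [h1]
  rw [abs_of_pos (inv_pos.mpr hcpos)] at h2
  have h3 : ∫ u : ℝ, G (c * u)
      = ∫ u : ℝ, f (x + c * u) * Real.exp (-u ^ 2) := by
    refine integral_congr_ae (Eventually.of_forall fun u => ?_)
    show f (c * u + x) * Real.exp (-(c * u) ^ 2 / (4 * b)) = f (x + c * u) * Real.exp (-u ^ 2)
    rw [add_comm (c * u) x]
    congr 1
    rw [show -(c * u) ^ 2 / (4 * b) = -u ^ 2 * (c ^ 2 / (4 * b)) by ring, hcsq,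
      div_self (by positivity : (4:ℝ) * b ≠ 0), mul_one]
  rw [h3] at h2
  rw [smul_eq_mul] at h2
  field_simp at h2 ⊢
  linarith [h2]

end
noncomputable section
variable {f : ℝ → ℝ} {C : ℝ}

lemma fubini_conv (ρ : Measure ℝ) [IsFiniteMeasure ρ] (hf : Continuous f)
    (hC : ∀ x, |f x| ≤ C) {b : ℝ} (hb : 0 < b) :
    ∫ a : ℝ, f a * (∫ x : ℝ, Real.exp (-(x - a) ^ 2 / (4 * b)) ∂ρ)
      = ∫ x : ℝ, (∫ a : ℝ, f a * Real.exp (-(x - a) ^ 2 / (4 * b))) ∂ρ := by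
  have hC0 : 0 ≤ C := (abs_nonneg _).trans (hC 0)
  set F : ℝ → ℝ → ℝ := fun a x => f a * Real.exp (-(x - a) ^ 2 / (4 * b)) with hF
  have hcontF : Continuous (Function.uncurry F) := by
    apply Continuous.mul
    · exact hf.comp continuous_fst
    · apply Real.continuous_exp.comp; continuity
  have base : Integrable (fun s : ℝ => Real.exp (-(1 / (4 * b)) * s ^ 2)) volume :=
    integrable_exp_neg_mul_sq (by positivity)
  have keyeq : ∀ x a : ℝ, Real.exp (-(x - a) ^ 2 / (4 * b))
      = Real.exp (-(1 / (4 * b)) * (a - x) ^ 2) := by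
    intro x a; congr 1; ring
  have inner_int : ∀ x : ℝ, Integrable (fun a => F a x) volume := by
    intro x
    have shift : Integrable (fun a : ℝ => Real.exp (-(1 / (4 * b)) * (a - x) ^ 2)) volume :=
      base.comp_sub_right x
    refine Integrable.mono' (shift.const_mul C)
      ((hf.mul (by apply Real.continuous_exp.comp; continuity)).aestronglyMeasurable) ?_
    refine Eventually.of_forall fun a => ?_
    rw [Real.norm_eq_abs, abs_mul, abs_of_pos (Real.exp_pos _), keyeq]
    exact mul_le_mul_of_nonneg_right (hC a) (Real.exp_pos _).le
  have hint : Integrable (Function.uncurry F) (volume.prod ρ) := by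
    rw [integrable_prod_iff' hcontF.aestronglyMeasurable]
    constructor
    · exact Eventually.of_forall inner_int
    · -- fun x => ∫ a, ‖F a x‖ is bounded by a constant
      set D : ℝ := C * ∫ s : ℝ, Real.exp (-(1 / (4 * b)) * s ^ 2) with hD
      refine Integrable.mono' (integrable_const D)
        (hcontF.stronglyMeasurable.norm.integral_prod_left'.aestronglyMeasurable) ?_
      refine Eventually.of_forall fun x => ?_
      have nonneg : 0 ≤ ∫ a, ‖F a x‖ := integral_nonneg fun a => norm_nonneg _
      simp only [Function.uncurry]
      rw [Real.norm_eq_abs, _root_.abs_of_nonneg nonneg]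
      have shift : Integrable (fun a : ℝ => Real.exp (-(1 / (4 * b)) * (a - x) ^ 2)) volume :=
        base.comp_sub_right x
      have hmono : ∫ a, ‖F a x‖ ≤ ∫ a, C * Real.exp (-(1 / (4 * b)) * (a - x) ^ 2) := by
        refine integral_mono (inner_int x).norm (shift.const_mul C) fun a => ?_
        rw [Real.norm_eq_abs, abs_mul, abs_of_pos (Real.exp_pos _), keyeq]
        exact mul_le_mul_of_nonneg_right (hC a) (Real.exp_pos _).le
      refine hmono.trans (le_of_eq ?_)
      rw [integral_const_mul, hD]
      congr 1
      exact integral_sub_right_eq_self (fun s : ℝ => Real.exp (-(1 / (4 * b)) * s ^ 2)) x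
  calc ∫ a : ℝ, f a * (∫ x : ℝ, Real.exp (-(x - a) ^ 2 / (4 * b)) ∂ρ)
      = ∫ a : ℝ, ∫ x : ℝ, F a x ∂ρ := by
        refine integral_congr_ae (Eventually.of_forall fun a => ?_)
        exact (integral_const_mul _ _).symm
    _ = ∫ x : ℝ, (∫ a : ℝ, F a x) ∂ρ := integral_integral_swap hint
end
noncomputable section
variable {f : ℝ → ℝ} {C : ℝ}

lemma exp_sq_integrable : Integrable (fun u : ℝ => Real.exp (-u ^ 2)) volume := by
  simpa using integrable_exp_neg_mul_sq (one_pos)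

lemma integral_eq_of_conv (μ ν : Measure ℝ) [IsFiniteMeasure μ] [IsFiniteMeasure ν]
    (hconv : ∀ {b : ℝ}, 0 < b → ∀ a : ℝ,
      ∫ x : ℝ, Real.exp (-(x - a) ^ 2 / (4 * b)) ∂μ
        = ∫ x : ℝ, Real.exp (-(x - a) ^ 2 / (4 * b)) ∂ν)
    (hf : Continuous f) (hC : ∀ x, |f x| ≤ C) :
    ∫ x, f x ∂μ = ∫ x, f x ∂ν := by
  have hC0 : 0 ≤ C := (abs_nonneg _).trans (hC 0)
  set E0 : ℝ := ∫ u : ℝ, Real.exp (-u ^ 2) with hE0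
  have hE0pos : 0 < E0 := by
    rw [hE0, show (fun u : ℝ => Real.exp (-u ^ 2)) = fun u : ℝ => Real.exp (-1 * u ^ 2) by
      funext u; norm_num, integral_gaussian]
    positivity
  -- basic integrability of the mollified integrand
  have hFint : ∀ (c x : ℝ), Integrable (fun u : ℝ => f (x + c * u) * Real.exp (-u ^ 2)) volume := by
    intro c x
    refine Integrable.mono' (exp_sq_integrable.const_mul C) ?_ ?_
    · exact ((hf.comp (by continuity)).mul (Real.continuous_exp.comp (by continuity))).aestronglyMeasurable
    · refine Eventually.of_forall fun u => ?_
      rw [Real.norm_eq_abs, abs_mul, _root_.abs_of_pos (Real.exp_pos _)]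
      exact mul_le_mul_of_nonneg_right (hC _) (Real.exp_pos _).le
  set bseq : ℕ → ℝ := fun n => 1 / (n + 1) with hbseq
  have hbpos : ∀ n, 0 < bseq n := fun n => by positivity
  set g : ℕ → ℝ → ℝ := fun n x => ∫ u : ℝ, f (x + 2 * Real.sqrt (bseq n) * u) * Real.exp (-u ^ 2)
    with hg
  -- uniform bound on g
  have hgbdd : ∀ n x, ‖g n x‖ ≤ C * E0 := by
    intro n x
    rw [hE0, ← integral_const_mul]
    refine norm_integral_le_of_norm_le (exp_sq_integrable.const_mul C) ?_
    refine Eventually.of_forall fun u => ?_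
    rw [Real.norm_eq_abs, abs_mul, _root_.abs_of_pos (Real.exp_pos _)]
    exact mul_le_mul_of_nonneg_right (hC _) (Real.exp_pos _).le
  -- continuity of g n
  have hgcont : ∀ n, Continuous (g n) := by
    intro n
    refine continuous_of_dominated (bound := fun u : ℝ => C * Real.exp (-u ^ 2))
      (fun x => ((hf.comp (by continuity)).mul
        (Real.continuous_exp.comp (by continuity))).aestronglyMeasurable) ?_
      (exp_sq_integrable.const_mul C) ?_
    · intro x
      refine Eventually.of_forall fun u => ?_
      rw [Real.norm_eq_abs, abs_mul, _root_.abs_of_pos (Real.exp_pos _)]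
      exact mul_le_mul_of_nonneg_right (hC _) (Real.exp_pos _).le
    · refine Eventually.of_forall fun u => ?_
      exact (hf.comp (by continuity)).mul continuous_const
  -- pointwise convergence of g n x to f x * E0
  have hglim : ∀ x, Filter.Tendsto (fun n => g n x) atTop (𝓝 (f x * E0)) := by
    intro x
    have hlim0 : Filter.Tendsto bseq atTop (𝓝 0) := tendsto_one_div_add_atTop_nhds_zero_nat
    have hsqrt : Filter.Tendsto (fun n => Real.sqrt (bseq n)) atTop (𝓝 0) := by
      have := (Real.continuous_sqrt.tendsto 0).comp hlim0
      simpa [Function.comp_def] using this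
    have hElim : f x * E0 = ∫ u : ℝ, f x * Real.exp (-u ^ 2) := (integral_const_mul _ _).symm
    rw [hElim]
    refine tendsto_integral_of_dominated_convergence (bound := fun u : ℝ => C * Real.exp (-u ^ 2))
      (fun n => ((hf.comp (by continuity)).mul
        (Real.continuous_exp.comp (by continuity))).aestronglyMeasurable)
      (exp_sq_integrable.const_mul C) ?_ ?_
    · intro n
      refine Eventually.of_forall fun u => ?_
      rw [Real.norm_eq_abs, abs_mul, _root_.abs_of_pos (Real.exp_pos _)]
      exact mul_le_mul_of_nonneg_right (hC _) (Real.exp_pos _).le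
    · refine Eventually.of_forall fun u => ?_
      have harg : Filter.Tendsto (fun n => x + 2 * Real.sqrt (bseq n) * u) atTop (𝓝 x) := by
        have : Filter.Tendsto (fun n => 2 * Real.sqrt (bseq n) * u) atTop (𝓝 0) := by
          have := (hsqrt.const_mul 2).mul_const u
          simpa using this
        have := tendsto_const_nhds.add this (f := fun _ : ℕ => x)
        simpa using this
      exact ((hf.tendsto x).comp harg).mul_const _
  -- equality of integrals of g n
  have hgEq : ∀ n, ∫ x, g n x ∂μ = ∫ x, g n x ∂ν := by
    intro n
    have hb := hbpos n
    set c : ℝ := 2 * Real.sqrt (bseq n) with hc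
    have hcpos : 0 < c := by positivity
    have e1 : ∫ a : ℝ, f a * (∫ x : ℝ, Real.exp (-(x - a) ^ 2 / (4 * bseq n)) ∂μ)
        = ∫ a : ℝ, f a * (∫ x : ℝ, Real.exp (-(x - a) ^ 2 / (4 * bseq n)) ∂ν) := by
      refine integral_congr_ae (Eventually.of_forall fun a => ?_)
      exact congrArg (fun z => f a * z) (hconv hb a)
    rw [fubini_conv μ hf hC hb, fubini_conv ν hf hC hb] at e1
    have e2 : ∀ (ρ : Measure ℝ) [IsFiniteMeasure ρ],
        ∫ x : ℝ, (∫ a : ℝ, f a * Real.exp (-(x - a) ^ 2 / (4 * bseq n))) ∂ρ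
          = c * ∫ x, g n x ∂ρ := by
      intro ρ _
      rw [← integral_const_mul]
      refine integral_congr_ae (Eventually.of_forall fun x => ?_)
      exact subst_identity hf hb x
    rw [e2 μ, e2 ν] at e1
    exact mul_left_cancel₀ hcpos.ne' e1
  -- pass to the limit
  have hlimμ : Filter.Tendsto (fun n => ∫ x, g n x ∂μ) atTop (𝓝 (∫ x, f x * E0 ∂μ)) := by
    refine tendsto_integral_of_dominated_convergence (bound := fun _ : ℝ => C * E0)
      (fun n => (hgcont n).aestronglyMeasurable) (integrable_const _) ?_ ?_
    · exact fun n => Eventually.of_forall fun x => hgbdd n x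
    · exact Eventually.of_forall fun x => hglim x
  have hlimν : Filter.Tendsto (fun n => ∫ x, g n x ∂ν) atTop (𝓝 (∫ x, f x * E0 ∂ν)) := by
    refine tendsto_integral_of_dominated_convergence (bound := fun _ : ℝ => C * E0)
      (fun n => (hgcont n).aestronglyMeasurable) (integrable_const _) ?_ ?_
    · exact fun n => Eventually.of_forall fun x => hgbdd n x
    · exact Eventually.of_forall fun x => hglim x
  have : ∫ x, f x * E0 ∂μ = ∫ x, f x * E0 ∂ν := by
    refine tendsto_nhds_unique ?_ hlimν
    simpa only [funext hgEq] using hlimμ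
  rw [integral_mul_const, integral_mul_const] at this
  exact mul_right_cancel₀ hE0pos.ne' this

end


end Auxiliary

/-- Appendix Lemma 14 (the integrated-exponential family separates finite measures): if two
finite measures `μ, ν` on `ℝ` satisfy `∫ (∫₀^y e^{itx} dt) dμ(x) = ∫ (∫₀^y e^{itx} dt) dν(x)`
for every `y ∈ ℝ`, then `μ = ν`. -/
theorem integrated_exponential_family_separating
    (μ ν : Measure ℝ) [IsFiniteMeasure μ] [IsFiniteMeasure ν]
    (h : ∀ y : ℝ,
      ∫ x : ℝ, (∫ t in (0 : ℝ)..y, Complex.exp (Complex.I * (t : ℂ) * (x : ℂ))) ∂μ =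
      ∫ x : ℝ, (∫ t in (0 : ℝ)..y, Complex.exp (Complex.I * (t : ℂ) * (x : ℂ))) ∂ν) :
    μ = ν := by
  have hchar : ∀ y : ℝ,
      ∫ x : ℝ, Complex.exp (Complex.I * y * x) ∂μ
        = ∫ x : ℝ, Complex.exp (Complex.I * y * x) ∂ν := auxCharEq μ ν h
  have hconv : ∀ {b : ℝ}, 0 < b → ∀ a : ℝ,
      ∫ x : ℝ, Real.exp (-(x - a) ^ 2 / (4 * b)) ∂μ
        = ∫ x : ℝ, Real.exp (-(x - a) ^ 2 / (4 * b)) ∂ν :=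
    fun hb a => auxGaussEq μ ν hchar hb a
  apply ext_of_forall_lintegral_eq_of_IsFiniteMeasure
  intro f
  set g : ℝ → ℝ := fun x => (f x : ℝ) with hgdef
  have hgcont : Continuous g := NNReal.continuous_coe.comp f.continuous
  obtain ⟨D, hD⟩ := f.bounded
  have hgbdd : ∀ x, |g x| ≤ g 0 + D := by
    intro x
    have h1 : dist (f x) (f 0) ≤ D := hD x 0
    rw [NNReal.dist_eq] at h1
    have h2 : |g x| = g x := abs_of_nonneg (f x).coe_nonneg
    have h3 : g x - g 0 ≤ D := (le_abs_self _).trans h1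
    linarith
  have hgi : ∀ (ρ : Measure ℝ) [IsFiniteMeasure ρ], Integrable g ρ :=
    fun ρ _ => integrable_of_bdd hgcont hgbdd
  have hEq : ∫ x, g x ∂μ = ∫ x, g x ∂ν := integral_eq_of_conv μ ν hconv hgcont hgbdd
  rw [lintegral_coe_eq_integral _ (hgi μ), lintegral_coe_eq_integral _ (hgi ν)]
  exact congrArg ENNReal.ofReal hEq
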